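/- Let P be a line-free polyhedron in R^d with the set of vertices vx(P) and recession cone rec(P). Then P = conv(vx(P)) + rec(P). -/

import Mathlib

open Pointwise

noncomputable section

/-- Standard inner product on `Fin d → ℝ`. -/
def dot {d : ℕ} (a x : Fin d → ℝ) : ℝ := ∑ i, a i * x i

/-- A polyhedron: intersection of finitely many closed halfspaces. -/
def IsPolyhedron {d : ℕ} (P : Set (Fin d → ℝ)) : Prop :=
  ∃ (n : ℕ) (a : Fin n → Fin d → ℝ) (b : Fin n → ℝ),
    P = {x | ∀ i, dot (a i) x ≤ b i}

/-- A rational polyhedron: intersection of finitely many rational closed halfspaces. -/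
def IsRationalPolyhedron {d : ℕ} (P : Set (Fin d → ℝ)) : Prop :=
  ∃ (n : ℕ) (a : Fin n → Fin d → ℚ) (b : Fin n → ℚ),
    P = {x | ∀ i, dot (fun j => ((a i j : ℝ))) x ≤ (b i : ℝ)}

/-- Recession cone of a set: `{u : P + u ⊆ P}`. -/
def recCone {d : ℕ} (P : Set (Fin d → ℝ)) : Set (Fin d → ℝ) :=
  {u | ∀ x ∈ P, x + u ∈ P}

/-- A set of vectors is a linear subspace. -/
def IsLinearSubspaceSet {d : ℕ} (S : Set (Fin d → ℝ)) : Prop :=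
  ∃ W : Submodule ℝ (Fin d → ℝ), S = (W : Set (Fin d → ℝ))

/-- A set is line-free if it contains no affine line. -/
def LineFree {d : ℕ} (P : Set (Fin d → ℝ)) : Prop :=
  ¬ ∃ (x v : Fin d → ℝ), v ≠ 0 ∧ ∀ t : ℝ, x + t • v ∈ P

/-- `F` is a face of the convex set `P`. -/
def IsFaceOf {d : ℕ} (P F : Set (Fin d → ℝ)) : Prop :=
  F ⊆ P ∧ Convex ℝ F ∧ ∀ x ∈ P, ∀ y ∈ P, ∀ t : ℝ, 0 < t → t < 1 →
    t • x + (1 - t) • y ∈ F → x ∈ F ∧ y ∈ F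

/-- Affine dimension of a set. -/
def adim {d : ℕ} (S : Set (Fin d → ℝ)) : ℕ :=
  Module.finrank ℝ (affineSpan ℝ S).direction

/-- Vertices: 0-dimensional faces, i.e. singleton faces. -/
def IsVertex {d : ℕ} (P : Set (Fin d → ℝ)) (x : Fin d → ℝ) : Prop :=
  IsFaceOf P {x}

/-- Union of all edges (1-dimensional faces) of `P`. -/
def edgeUnion {d : ℕ} (P : Set (Fin d → ℝ)) : Set (Fin d → ℝ) :=
  ⋃₀ {e | IsFaceOf P e ∧ adim e = 1}

/-- A representation of `L` with width `m`:
`L = {x : bᵢ - m ≤ ⟨aᵢ, x⟩ ≤ bᵢ, i ∈ [n]}` with `aᵢ ∈ ℤ^d \ {0}`, `bᵢ ∈ ℤ`. -/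
def HasWidthRep {d : ℕ} (L : Set (Fin d → ℝ)) (m : ℕ) : Prop :=
  ∃ (n : ℕ) (a : Fin n → Fin d → ℤ) (b : Fin n → ℤ),
    (∀ i, a i ≠ 0) ∧
    L = {x | ∀ i, (b i : ℝ) - (m : ℝ) ≤ dot (fun j => ((a i j : ℝ))) x ∧
        dot (fun j => ((a i j : ℝ))) x ≤ (b i : ℝ)}

/-- Max-facet-width, `+∞` if no representation exists. -/
def mfw {d : ℕ} (L : Set (Fin d → ℝ)) : ℕ∞ :=
  sInf {m : ℕ∞ | ∃ k : ℕ, m = (k : ℕ∞) ∧ HasWidthRep L k}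

/-- The set of integral points of `ℝ^d`. -/
def intPoints (d : ℕ) : Set (Fin d → ℝ) :=
  {x | ∃ z : Fin d → ℤ, x = fun i => (z i : ℝ)}

/-- A lattice-free set: `d`-dimensional closed convex set whose interior
contains no integral point. -/
def LatticeFree {d : ℕ} (L : Set (Fin d → ℝ)) : Prop :=
  IsClosed L ∧ Convex ℝ L ∧ adim L = d ∧ interior L ∩ intPoints d = ∅

/-- A maximal lattice-free set. -/
def MaxLatticeFree {d : ℕ} (L : Set (Fin d → ℝ)) : Prop :=
  LatticeFree L ∧ ∀ L' : Set (Fin d → ℝ), LatticeFree L' → L ⊆ L' → L = L'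

/-- `ℤ^d`-equivalence: `Y = U(X) + b` for a unimodular `U` and integral `b`. -/
def ZdEquiv {d : ℕ} (X Y : Set (Fin d → ℝ)) : Prop :=
  ∃ (U : Matrix (Fin d) (Fin d) ℤ) (b : Fin d → ℤ),
    (U.det = 1 ∨ U.det = -1) ∧
    Y = (fun x => (U.map (Int.cast : ℤ → ℝ)).mulVec x + fun i => (b i : ℝ)) '' X

/-- Sign vectors with an even number of `-1` entries. -/
def Aplus (d : ℕ) : Set (Fin d → ℝ) :=
  {a | (∀ i, a i = 1 ∨ a i = -1) ∧ Even {i | a i = -1}.ncard}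

/-- Sign vectors with an odd number of `-1` entries. -/
def Aminus (d : ℕ) : Set (Fin d → ℝ) :=
  {a | (∀ i, a i = 1 ∨ a i = -1) ∧ Odd {i | a i = -1}.ncard}

section DotAux

variable {d : ℕ}

lemma dot_comm (a x : Fin d → ℝ) : dot a x = dot x a := by
  simp [dot, mul_comm]

lemma dot_add_right (a x y : Fin d → ℝ) : dot a (x + y) = dot a x + dot a y := by
  simp [dot, mul_add, Finset.sum_add_distrib]

lemma dot_smul_right (a : Fin d → ℝ) (t : ℝ) (x : Fin d → ℝ) :
    dot a (t • x) = t * dot a x := by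
  simp [dot, Finset.mul_sum, mul_left_comm]

lemma dot_neg_right (a x : Fin d → ℝ) : dot a (-x) = - dot a x := by
  simp [dot]

lemma dot_sub_right (a x y : Fin d → ℝ) : dot a (x - y) = dot a x - dot a y := by
  simp [dot, mul_sub, Finset.sum_sub_distrib]

lemma eq_zero_of_dot_self {v : Fin d → ℝ} (h : dot v v = 0) : v = 0 := by
  funext i
  have h0 : ∀ j ∈ Finset.univ, (0:ℝ) ≤ v j * v j := fun j _ => mul_self_nonneg _
  have := (Finset.sum_eq_zero_iff_of_nonneg h0).1 h i (Finset.mem_univ i)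
  have := mul_self_eq_zero.1 this
  simpa using this

/-- `w ↦ dot w v` as a linear map. -/
def dotRightL (v : Fin d → ℝ) : (Fin d → ℝ) →ₗ[ℝ] ℝ where
  toFun w := dot w v
  map_add' x y := by
    show dot (x + y) v = dot x v + dot y v
    rw [dot_comm, dot_add_right, dot_comm v x, dot_comm v y]
  map_smul' c x := by
    show dot (c • x) v = c • dot x v
    rw [dot_comm, dot_smul_right, dot_comm v x, smul_eq_mul]

@[simp] lemma dotRightL_apply (v w : Fin d → ℝ) : dotRightL v w = dot w v := rfl

lemma exists_ortho (W : Submodule ℝ (Fin d → ℝ)) (hW : W ≠ ⊤) :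
    ∃ v : Fin d → ℝ, v ≠ 0 ∧ ∀ w ∈ W, dot w v = 0 := by
  obtain ⟨x, hx⟩ : ∃ x, x ∉ W := by
    by_contra h; push_neg at h; exact hW (Submodule.eq_top_iff'.2 h)
  obtain ⟨φ, hφW, hφx⟩ : ∃ φ ∈ W.dualAnnihilator, φ x ≠ 0 := by
    by_contra h; push_neg at h
    exact hx ((Subspace.forall_mem_dualAnnihilator_apply_eq_zero_iff W x).1 h)
  set v : Fin d → ℝ := fun i => φ (fun j => if i = j then 1 else 0) with hv
  have key : ∀ y, φ y = dot v y := by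
    intro y
    conv_lhs => rw [pi_eq_sum_univ y, map_sum]
    simp [dot, hv, mul_comm]
  refine ⟨v, ?_, ?_⟩
  · intro h0
    apply hφx
    rw [key x, h0]
    simp [dot]
  · intro w hw
    rw [dot_comm, ← key w]
    exact ((Submodule.mem_dualAnnihilator φ).1 hφW) w hw

end DotAux

section PolyAux

variable {d n : ℕ}

lemma convex_polyset (a : Fin n → Fin d → ℝ) (b : Fin n → ℝ) :
    Convex ℝ {x : Fin d → ℝ | ∀ i, dot (a i) x ≤ b i} := by
  have h : {x : Fin d → ℝ | ∀ i, dot (a i) x ≤ b i} = ⋂ i, {x | dot (a i) x ≤ b i} := by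
    ext x; simp
  rw [h]
  refine convex_iInter fun i => convex_halfSpace_le ⟨fun x y => dot_add_right _ _ _,
    fun c x => dot_smul_right _ _ _⟩ (b i)

lemma recCone_convex {P : Set (Fin d → ℝ)} (hP : Convex ℝ P) : Convex ℝ (recCone P) := by
  intro u hu w hw α β hα hβ hαβ x hx
  have h := hP (hu x hx) (hw x hx) hα hβ hαβ
  have e : α • (x + u) + β • (x + w) = (α + β) • x + (α • u + β • w) := by module
  rw [e, hαβ, one_smul] at h
  exact h

lemma recCone_add {P : Set (Fin d → ℝ)} {u w : Fin d → ℝ}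
    (hu : u ∈ recCone P) (hw : w ∈ recCone P) : u + w ∈ recCone P := by
  intro x hx
  have := hw _ (hu x hx)
  rwa [add_assoc] at this

lemma zero_mem_recCone {P : Set (Fin d → ℝ)} : (0 : Fin d → ℝ) ∈ recCone P := by
  intro x hx; simpa using hx

lemma mem_recCone_of_le (a : Fin n → Fin d → ℝ) (b : Fin n → ℝ) (P : Set (Fin d → ℝ))
    (hPe : P = {x | ∀ i, dot (a i) x ≤ b i}) {u : Fin d → ℝ}
    (h : ∀ i, dot (a i) u ≤ 0) : u ∈ recCone P := by
  intro x hx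
  rw [hPe] at hx ⊢
  intro i
  rw [dot_add_right]
  linarith [hx i, h i]

lemma vertex_of_span_top (a : Fin n → Fin d → ℝ) (b : Fin n → ℝ) (P : Set (Fin d → ℝ))
    (hPe : P = {x | ∀ i, dot (a i) x ≤ b i}) {x : Fin d → ℝ} (hx : x ∈ P)
    (hspan : Submodule.span ℝ (a '' {i | dot (a i) x = b i}) = ⊤) : IsVertex P x := by
  refine ⟨Set.singleton_subset_iff.2 hx, convex_singleton x, ?_⟩
  intro p hp q hq t ht0 ht1 hmem
  rw [Set.mem_singleton_iff] at hmem
  have key : ∀ i, dot (a i) x = b i → dot (a i) p = b i := by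
    intro i hi
    have hpi : dot (a i) p ≤ b i := by rw [hPe] at hp; exact hp i
    have hqi : dot (a i) q ≤ b i := by rw [hPe] at hq; exact hq i
    have hsum : t * dot (a i) p + (1 - t) * dot (a i) q = b i := by
      have : dot (a i) (t • p + (1 - t) • q) = b i := by rw [hmem]; exact hi
      rwa [dot_add_right, dot_smul_right, dot_smul_right] at this
    nlinarith
  have hperp : ∀ z : Fin d → ℝ, (∀ i, dot (a i) x = b i → dot (a i) z = b i) →
      z - x = 0 := by
    intro z hz
    have hker : Submodule.span ℝ (a '' {i | dot (a i) x = b i}) ≤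
        LinearMap.ker (dotRightL (z - x)) := by
      rw [Submodule.span_le]
      rintro _ ⟨i, hi, rfl⟩
      simp only [SetLike.mem_coe, LinearMap.mem_ker, dotRightL_apply]
      rw [dot_sub_right, hz i hi, hi, sub_self]
    have hall : ∀ w : Fin d → ℝ, dot w (z - x) = 0 := by
      intro w
      have hw : w ∈ LinearMap.ker (dotRightL (z - x)) :=
        hker (hspan ▸ Submodule.mem_top)
      simpa using hw
    exact eq_zero_of_dot_self (hall (z - x))
  have hpx : p = x := sub_eq_zero.1 (hperp p key)
  refine ⟨Set.mem_singleton_iff.2 hpx, ?_⟩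
  have hqx : q = x := by
    have h1 : t • x + (1 - t) • q = x := by rw [hpx] at hmem; exact hmem
    have h2 : (1 - t) • q = (1 - t) • x := by
      have e : (1 - t) • q = (t • x + (1 - t) • q) - t • x := by module
      rw [e, h1]
      module
    have hne : (1 : ℝ) - t ≠ 0 := by linarith
    exact smul_right_injective _ hne h2
  exact Set.mem_singleton_iff.2 hqx

end PolyAux

section MainAux

variable {d n : ℕ}

lemma poly_step (a : Fin n → Fin d → ℝ) (b : Fin n → ℝ) {x : Fin d → ℝ}
    (hx : ∀ i, dot (a i) x ≤ b i) (u : Fin d → ℝ)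
    (horth : ∀ i, dot (a i) x = b i → dot (a i) u = 0)
    {j : Fin n} (hj : 0 < dot (a j) u) :
    ∃ t : ℝ, 0 < t ∧ (∀ i, dot (a i) (x + t • u) ≤ b i) ∧
      Submodule.span ℝ (a '' {i | dot (a i) x = b i}) <
      Submodule.span ℝ (a '' {i | dot (a i) (x + t • u) = b i}) := by
  classical
  set I : Finset (Fin n) := Finset.univ.filter (fun i => 0 < dot (a i) u) with hI
  have hjI : j ∈ I := by simp [hI, hj]
  obtain ⟨i₀, hi₀I, hi₀min⟩ :=
    I.exists_min_image (fun i => (b i - dot (a i) x) / dot (a i) u) ⟨j, hjI⟩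
  have hc : ∀ i ∈ I, 0 < dot (a i) u := by
    intro i hi; simpa [hI] using hi
  have hslack : ∀ i ∈ I, 0 < b i - dot (a i) x := by
    intro i hi
    rcases lt_or_eq_of_le (hx i) with h | h
    · linarith
    · exact absurd (horth i h) (ne_of_gt (hc i hi))
  set t := (b i₀ - dot (a i₀) x) / dot (a i₀) u with ht_def
  have ht : 0 < t := div_pos (hslack _ hi₀I) (hc _ hi₀I)
  have hyP : ∀ i, dot (a i) (x + t • u) ≤ b i := by
    intro i
    rw [dot_add_right, dot_smul_right]
    by_cases hci : 0 < dot (a i) u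
    · have hiI : i ∈ I := by simp [hI, hci]
      have h1 : t ≤ (b i - dot (a i) x) / dot (a i) u := hi₀min i hiI
      have h2 : t * dot (a i) u ≤ b i - dot (a i) x := by
        rw [← le_div_iff₀ hci]; exact h1
      linarith
    · push_neg at hci
      have : t * dot (a i) u ≤ 0 := mul_nonpos_of_nonneg_of_nonpos ht.le hci
      linarith [hx i]
  refine ⟨t, ht, hyP, ?_⟩
  have hsub : {i | dot (a i) x = b i} ⊆ {i | dot (a i) (x + t • u) = b i} := by
    intro i hi
    simp only [Set.mem_setOf_eq] at hi ⊢
    rw [dot_add_right, dot_smul_right, horth i hi, mul_zero, add_zero]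
    exact hi
  have hmono := Submodule.span_mono (R := ℝ) (Set.image_mono (f := a) hsub)
  have hi₀new : dot (a i₀) (x + t • u) = b i₀ := by
    rw [dot_add_right, dot_smul_right, ht_def,
      div_mul_cancel₀ _ (ne_of_gt (hc _ hi₀I))]
    ring
  have hmem : a i₀ ∈ Submodule.span ℝ (a '' {i | dot (a i) (x + t • u) = b i}) :=
    Submodule.subset_span ⟨i₀, hi₀new, rfl⟩
  have hnot : a i₀ ∉ Submodule.span ℝ (a '' {i | dot (a i) x = b i}) := by
    intro hmem'
    have hker : Submodule.span ℝ (a '' {i | dot (a i) x = b i}) ≤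
        LinearMap.ker (dotRightL u) := by
      rw [Submodule.span_le]
      rintro _ ⟨i, hi, rfl⟩
      simp only [SetLike.mem_coe, LinearMap.mem_ker, dotRightL_apply]
      exact horth i hi
    have : dot (a i₀) u = 0 := by simpa using hker hmem'
    exact absurd this (ne_of_gt (hc _ hi₀I))
  exact lt_of_le_of_ne hmono (fun h => hnot (h ▸ hmem))

lemma main_ind (a : Fin n → Fin d → ℝ) (b : Fin n → ℝ) (P : Set (Fin d → ℝ))
    (hPe : P = {x | ∀ i, dot (a i) x ≤ b i}) (hPfree : LineFree P) :
    ∀ k : ℕ, ∀ x ∈ P,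
      d ≤ k + Module.finrank ℝ (Submodule.span ℝ (a '' {i | dot (a i) x = b i})) →
      x ∈ convexHull ℝ {y | IsVertex P y} + recCone P := by
  have hvert : ∀ x ∈ P, Submodule.span ℝ (a '' {i | dot (a i) x = b i}) = ⊤ →
      x ∈ convexHull ℝ {y | IsVertex P y} + recCone P := by
    intro x hx hspan
    have hv : IsVertex P x := vertex_of_span_top a b P hPe hx hspan
    have h1 : x ∈ convexHull ℝ {y | IsVertex P y} := subset_convexHull ℝ _ hv
    have := Set.add_mem_add h1 (zero_mem_recCone (P := P))
    simpa using this
  have hQrec : ∀ q ∈ convexHull ℝ {y | IsVertex P y} + recCone P, ∀ w ∈ recCone P,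
      q + w ∈ convexHull ℝ {y | IsVertex P y} + recCone P := by
    intro q hq w hw
    rw [Set.mem_add] at hq
    obtain ⟨p, hp, v, hv, rfl⟩ := hq
    rw [add_assoc]
    exact Set.add_mem_add hp (recCone_add hv hw)
  intro k
  induction k with
  | zero =>
    intro x hx hrank
    apply hvert x hx
    apply Submodule.eq_top_of_finrank_eq
    have hle := Submodule.finrank_le (Submodule.span ℝ (a '' {i | dot (a i) x = b i}))
    rw [Module.finrank_fin_fun] at hle ⊢
    omega
  | succ k ih =>
    intro x hx hrank
    by_cases hspan : Submodule.span ℝ (a '' {i | dot (a i) x = b i}) = ⊤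
    · exact hvert x hx hspan
    obtain ⟨v, hv0, hvorth⟩ := exists_ortho _ hspan
    have horth : ∀ i, dot (a i) x = b i → dot (a i) v = 0 := fun i hi =>
      hvorth _ (Submodule.subset_span ⟨i, hi, rfl⟩)
    have hx' : ∀ i, dot (a i) x ≤ b i := by rw [hPe] at hx; exact hx
    have hex : ∃ i, dot (a i) v ≠ 0 := by
      by_contra h
      push_neg at h
      refine hPfree ⟨x, v, hv0, fun t => ?_⟩
      rw [hPe]
      intro i
      rw [dot_add_right, dot_smul_right, h i, mul_zero, add_zero]
      exact hx' i
    obtain ⟨u, horthu, j, hju⟩ : ∃ u : Fin d → ℝ,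
        (∀ i, dot (a i) x = b i → dot (a i) u = 0) ∧ ∃ j, 0 < dot (a j) u := by
      obtain ⟨i, hi⟩ := hex
      rcases hi.lt_or_gt with h | h
      · refine ⟨-v, fun i' hi' => by rw [dot_neg_right, horth i' hi', neg_zero], i, ?_⟩
        rw [dot_neg_right]; linarith
      · exact ⟨v, horth, i, h⟩
    obtain ⟨t, ht, hyP, hlt⟩ := poly_step a b hx' u horthu hju
    have hyP' : x + t • u ∈ P := by rw [hPe]; exact hyP
    have hrk := Submodule.finrank_lt_finrank_of_lt hlt
    have hyrank : d ≤ k + Module.finrank ℝ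
        (Submodule.span ℝ (a '' {i | dot (a i) (x + t • u) = b i})) := by omega
    have hyQ := ih _ hyP' hyrank
    by_cases h2 : ∃ j', 0 < dot (a j') (-u)
    · obtain ⟨j', hj'⟩ := h2
      have horth' : ∀ i, dot (a i) x = b i → dot (a i) (-u) = 0 := fun i hi => by
        rw [dot_neg_right, horthu i hi, neg_zero]
      obtain ⟨s, hs, hzP, hlt'⟩ := poly_step a b hx' (-u) horth' hj'
      have hzP' : x + s • (-u) ∈ P := by rw [hPe]; exact hzP
      have hrk' := Submodule.finrank_lt_finrank_of_lt hlt'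
      have hzrank : d ≤ k + Module.finrank ℝ
          (Submodule.span ℝ (a '' {i | dot (a i) (x + s • (-u)) = b i})) := by omega
      have hzQ := ih _ hzP' hzrank
      have hQconv : Convex ℝ (convexHull ℝ {y | IsVertex P y} + recCone P) :=
        (convex_convexHull ℝ _).add (recCone_convex (hPe ▸ convex_polyset a b))
      have hts : 0 < t + s := by linarith
      have htsne : t + s ≠ 0 := ne_of_gt hts
      have hsum : s / (t + s) + t / (t + s) = 1 := by
        rw [← add_div, add_comm s t, div_self htsne]
      have hcoef : s / (t + s) * t + t / (t + s) * (-s) = 0 := by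
        field_simp
        ring
      have key : (s / (t + s)) • (x + t • u) + (t / (t + s)) • (x + s • (-u)) = x := by
        have e : (s / (t + s)) • (x + t • u) + (t / (t + s)) • (x + s • (-u)) =
            (s / (t + s) + t / (t + s)) • x +
            (s / (t + s) * t + t / (t + s) * (-s)) • u := by module
        rw [e, hsum, hcoef, one_smul, zero_smul, add_zero]
      have hmem := hQconv hyQ hzQ (le_of_lt (div_pos hs hts)) (le_of_lt (div_pos ht hts)) hsum
      rwa [key] at hmem
    · push_neg at h2
      have hrec : t • (-u) ∈ recCone P := by
        apply mem_recCone_of_le a b P hPe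
        intro i
        rw [dot_smul_right]
        exact mul_nonpos_of_nonneg_of_nonpos ht.le (h2 i)
      have hmem := hQrec _ hyQ _ hrec
      have e : x + t • u + t • (-u) = x := by module
      rwa [e] at hmem

end MainAux

theorem stmt3 {d : ℕ} (P : Set (Fin d → ℝ))
    (hP : IsPolyhedron P) (hPfree : LineFree P) :
    P = convexHull ℝ {x | IsVertex P x} + recCone P := by
  obtain ⟨n, a, b, hPe⟩ := hP
  apply Set.Subset.antisymm
  · intro x hx
    exact main_ind a b P hPe hPfree d x hx (Nat.le_add_right d _)
  · intro z hz
    rw [Set.mem_add] at hz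
    obtain ⟨p, hp, w, hw, rfl⟩ := hz
    have hpP : p ∈ P := by
      have hsub : {y | IsVertex P y} ⊆ P := fun y hy => hy.1 rfl
      exact convexHull_min hsub (hPe ▸ convex_polyset a b) hp
    exact hw p hpP
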